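/- Consider 2n tokens on positions 1,…,2n undergoing an odd-even transposition network: in odd rounds, swap pairs (1,2),(3,4),…; in even rounds, swap pairs (2,3),(4,5),…. After exactly n rounds of alternating applications (starting with odd), the token initially at position k is at position 2n+1−k; i.e., the network implements the full reversal permutation in n rounds. -/

import Mathlib

/-- The odd layer of the odd-even transposition network on positions
`0,…,2n−1` (zero-based): swap the pairs `(0,1),(2,3),…`. -/
def oddLayer (p : ℕ) : ℕ := if p % 2 = 0 then p + 1 else p - 1

/-- The even layer of the odd-even transposition network on positions
`0,…,2n−1`: swap the pairs `(1,2),(3,4),…`, fixing the two endpoints. -/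
def evenLayer (n : ℕ) (p : ℕ) : ℕ :=
  if p = 0 ∨ p = 2 * n - 1 then p
  else if p % 2 = 1 then p + 1 else p - 1

/-- The position of the token initially at position `k` after `r` rounds of
the network; each round applies the odd layer followed by the even layer. -/
def oePos (n : ℕ) : ℕ → ℕ → ℕ
  | 0, k => k
  | r + 1, k => evenLayer n (oddLayer (oePos n r k))

/-- Closed form for the trajectory. -/
def oeF (n r k : ℕ) : ℕ :=
  if k % 2 = 0 then (if k + 2 * r < 2 * n then k + 2 * r else 4 * n - 1 - (k + 2 * r))
  else (if 2 * r < k then k - 2 * r else 2 * r - 1 - k)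

lemma oePos_closed (n : ℕ) (hn : 1 ≤ n) :
    ∀ r k, r ≤ n → k < 2 * n → oePos n r k = oeF n r k := by
  intro r
  induction r with
  | zero =>
    intro k _ hk
    simp only [oePos, oeF]
    split_ifs <;> simp -failIfUnchanged only [false_or] at * <;> omega
  | succ r ih =>
    intro k hr hk
    have IH := ih k (by omega) hk
    simp only [oePos, IH, oeF, oddLayer, evenLayer] at *
    split_ifs <;> simp -failIfUnchanged only [false_or] at * <;> omega

theorem stmt_19 (n : ℕ) (hn : 1 ≤ n) : ∀ k < 2 * n, oePos n n k = 2 * n - 1 - k := by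
  intro k hk
  rw [oePos_closed n hn n k le_rfl hk, oeF]
  split_ifs <;> omega
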